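/- Let I be a subset of the hermitian 2×2 complex matrices Re(M₂(ℂ)) which is a norm-closed convex cone, contains all real multiples of the identity matrix, and has nonempty interior in Re(M₂(ℂ)). Then I is an isocone of M₂(ℂ): it is nonempty, stable under composition with continuous non-decreasing functions via continuous functional calculus, stable under sums, norm-closed, and separates the states of M₂(ℂ). -/

import Mathlib

open scoped ComplexOrder Matrix.Norms.L2Operator

noncomputable instance : CStarAlgebra (Matrix (Fin 2) (Fin 2) ℂ) where

def IsState {A : Type*} [CStarAlgebra A] (φ : A →ₗ[ℂ] ℂ) : Prop :=
  φ 1 = 1 ∧ ∀ a : A, 0 ≤ φ (star a * a)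

def IsIsocone {A : Type*} [CStarAlgebra A] (I : Set A) : Prop :=
  I.Nonempty ∧
  (∀ a ∈ I, IsSelfAdjoint a) ∧
  (∀ a ∈ I, ∀ f : ℝ → ℝ, Continuous f → Monotone f → cfc f a ∈ I) ∧
  (∀ a ∈ I, ∀ b ∈ I, a + b ∈ I) ∧
  IsClosed I ∧
  (∀ φ ψ : A →ₗ[ℂ] ℂ, IsState φ → IsState ψ → (∀ a ∈ I, φ a = ψ a) → φ = ψ)

/-- On a 2×2 hermitian matrix, the cfc of a monotone function is an affine function of the
matrix with nonnegative slope. -/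
lemma cfc_affine_of_monotone (a : Matrix (Fin 2) (Fin 2) ℂ) (ha : IsSelfAdjoint a)
    (f : ℝ → ℝ) (hf : Continuous f) (hmono : Monotone f) :
    ∃ t c : ℝ, 0 ≤ t ∧ cfc f a = t • a + c • (1 : Matrix (Fin 2) (Fin 2) ℂ) := by
  have hherm : a.IsHermitian := ha
  set e := hherm.eigenvalues with he
  set p := min (e 0) (e 1) with hp
  set q := max (e 0) (e 1) with hq
  have hpq : p ≤ q := min_le_max
  have hspec : ∀ x ∈ spectrum ℝ a, x = p ∨ x = q := by
    intro x hx
    rw [hherm.spectrum_real_eq_range_eigenvalues] at hx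
    obtain ⟨i, rfl⟩ := hx
    fin_cases i
    · rcases le_total (e 0) (e 1) with h | h
      · left; simp [hp, h]; rfl
      · right; simp [hq, h]; rfl
    · rcases le_total (e 0) (e 1) with h | h
      · right; simp [hq, h]; rfl
      · left; simp [hp, h]; rfl
  by_cases hpq' : p = q
  · refine ⟨0, f p, le_refl 0, ?_⟩
    have : cfc f a = cfc (fun _ : ℝ => f p) a := by
      apply cfc_congr
      intro x hx
      rcases hspec x hx with h | h
      · rw [h]
      · rw [h, hpq']
    rw [this, cfc_const (f p) a, Algebra.algebraMap_eq_smul_one]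
    simp
  · have hlt : p < q := lt_of_le_of_ne hpq hpq'
    set t := (f q - f p) / (q - p) with ht
    have ht0 : 0 ≤ t := div_nonneg (sub_nonneg.mpr (hmono hpq)) (sub_nonneg.mpr hpq)
    have htqp : t * (q - p) = f q - f p :=
      div_mul_cancel₀ _ (sub_ne_zero.mpr (ne_of_gt hlt))
    set c := f p - t * p with hc
    refine ⟨t, c, ht0, ?_⟩
    have key : cfc f a = cfc (fun x : ℝ => t * x + c) a := by
      apply cfc_congr
      intro x hx
      rcases hspec x hx with h | h
      · rw [h, hc]; ring
      · rw [h, hc]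
        ring_nf at htqp ⊢
        linarith
    rw [key]
    have h1 : cfc (fun x : ℝ => t * x + c) a
        = cfc (fun x : ℝ => t * x) a + cfc (fun _ : ℝ => c) a := by
      exact cfc_add a _ _
    rw [h1, cfc_const c a, Algebra.algebraMap_eq_smul_one]
    have h2 : cfc (fun x : ℝ => t * x) a = t • a := by
      have := cfc_const_mul t (id : ℝ → ℝ) a
      simpa [cfc_id ℝ a] using this
    rw [h2]

/-- a norm-closed convex cone of hermitian 2×2 matrices which contains the real
multiples of the identity and has nonempty interior in the hermitian part is an isocone of
`M₂(ℂ)`. -/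
theorem isocone_of_cone_in_M2 (I : Set (Matrix (Fin 2) (Fin 2) ℂ))
    (hsa : ∀ a ∈ I, IsSelfAdjoint a)
    (hclosed : IsClosed I)
    (hadd : ∀ a ∈ I, ∀ b ∈ I, a + b ∈ I)
    (hsmul : ∀ t : ℝ, 0 ≤ t → ∀ a ∈ I, (t : ℂ) • a ∈ I)
    (hunit : ∀ r : ℝ, (r : ℂ) • (1 : Matrix (Fin 2) (Fin 2) ℂ) ∈ I)
    (hint : ∃ a ∈ I, ∃ ε : ℝ, 0 < ε ∧
      ∀ b : Matrix (Fin 2) (Fin 2) ℂ, IsSelfAdjoint b → ‖b - a‖ < ε → b ∈ I) :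
    IsIsocone I := by
  refine ⟨⟨(0:ℂ) • 1, hunit 0⟩, hsa, ?_, hadd, hclosed, ?_⟩
  · -- cfc stability
    intro a haI f hf hmono
    obtain ⟨t, c, ht0, hcfc⟩ := cfc_affine_of_monotone a (hsa a haI) f hf hmono
    rw [hcfc]
    have h1 : (t : ℂ) • a = t • a := by
      ext i j; simp [Matrix.smul_apply, Complex.real_smul]
    have h2 : (c : ℂ) • (1 : Matrix (Fin 2) (Fin 2) ℂ) = c • 1 := by
      ext i j; simp [Matrix.smul_apply, Complex.real_smul]
    rw [← h1, ← h2]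
    exact hadd _ (hsmul t ht0 a haI) _ (hunit c)
  · -- states separation
    intro φ ψ _ _ hagree
    obtain ⟨a, haI, ε, hε, hball⟩ := hint
    -- φ and ψ agree on all self-adjoint matrices
    have hsa_eq : ∀ h : Matrix (Fin 2) (Fin 2) ℂ, IsSelfAdjoint h → φ h = ψ h := by
      intro h hh
      set δ := ε / (2 * (‖h‖ + 1)) with hδ
      have hden : (0:ℝ) < 2 * (‖h‖ + 1) := by positivity
      have hδpos : 0 < δ := div_pos hε hden
      have hmem : a + (δ : ℂ) • h ∈ I := by
        apply hball
        · exact (hsa a haI).add (IsSelfAdjoint.smul (by simp [IsSelfAdjoint, Complex.conj_ofReal]) hh)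
        · rw [add_sub_cancel_left, norm_smul]
          have h1 : ‖(δ : ℂ)‖ = δ := by
            rw [Complex.norm_real, Real.norm_of_nonneg hδpos.le]
          rw [h1, hδ]
          calc ε / (2 * (‖h‖ + 1)) * ‖h‖ ≤ ε / 2 := by
                rw [div_mul_eq_mul_div, div_le_div_iff₀ hden two_pos]
                nlinarith [norm_nonneg h]
            _ < ε := by linarith
      have e1 := hagree _ hmem
      have e2 := hagree _ haI
      rw [map_add, map_add, map_smul, map_smul, e2, smul_eq_mul, smul_eq_mul] at e1
      have hne : (δ : ℂ) ≠ 0 := by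
        simpa using hδpos.ne'
      exact mul_left_cancel₀ hne (add_left_cancel e1)
    apply LinearMap.ext
    intro x
    set h := (1/2 : ℂ) • (x + star x) with hh
    set k := (-(Complex.I)/2) • (x - star x) with hk
    clear_value h k
    have hhsa : IsSelfAdjoint h := by
      rw [hh]
      exact IsSelfAdjoint.smul (by simp [IsSelfAdjoint, Complex.ext_iff]) (IsSelfAdjoint.add_star_self x)
    have hksa : IsSelfAdjoint k := by
      rw [hk]
      show star _ = _
      rw [star_smul, star_sub, star_star]
      have hs : star (-(Complex.I)/2 : ℂ) = Complex.I/2 := by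
        simp [Complex.ext_iff]
      rw [hs]
      module
    have hx : x = h + Complex.I • k := by
      rw [hh, hk]
      match_scalars <;> simp [Complex.ext_iff] <;> ring
    rw [hx, map_add, map_add, map_smul, map_smul, hsa_eq h hhsa, hsa_eq k hksa]
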